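/- Let S0, S1 be finite nonempty sets of pairs (L, q) of reals with q > 0. Suppose (L0*, q0*) ∈ S0 and (L1*, q1*) ∈ S1 minimize L_AIFV(s0, s1) = (q1·L0 + q0·L1)/(q0+q1) over S0 × S1, with optimal value L* and C* = (L1* − L0*)/(q0* + q1*). Suppose (L0, q0) ∈ S0 minimizes L0' + Ĉ·q0' over S0 and (L1, q1) ∈ S1 minimizes L1' − Ĉ·q1' over S1 for some fixed Ĉ, and suppose Ĉ = (L1 − L0)/(q0 + q1) (fixed point of the cost update). Then (q1·L0 + q0·L1)/(q0 + q1) = L*. -/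
import Mathlib


/-- A fixed point of the iterative cost-update algorithm yields globally
optimal AIFV code trees (abstract form of Theorem 2). -/
theorem stmt_12 (S0 S1 : Finset (ℝ × ℝ)) (hS0 : S0.Nonempty) (hS1 : S1.Nonempty)
    (hq0S : ∀ p ∈ S0, 0 < p.2) (hq1S : ∀ p ∈ S1, 0 < p.2)
    (L0s q0s L1s q1s L0 q0 L1 q1 Lstar Chat : ℝ)
    (hmem0s : (L0s, q0s) ∈ S0) (hmem1s : (L1s, q1s) ∈ S1)
    (hLstar : Lstar = (q1s * L0s + q0s * L1s) / (q0s + q1s))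
    (hopt : ∀ p0 ∈ S0, ∀ p1 ∈ S1,
      Lstar ≤ (p1.2 * p0.1 + p0.2 * p1.1) / (p0.2 + p1.2))
    (hmem0 : (L0, q0) ∈ S0) (hmem1 : (L1, q1) ∈ S1)
    (hmin0 : ∀ p ∈ S0, L0 + Chat * q0 ≤ p.1 + Chat * p.2)
    (hmin1 : ∀ p ∈ S1, L1 - Chat * q1 ≤ p.1 - Chat * p.2)
    (hfix : Chat = (L1 - L0) / (q0 + q1)) :
    (q1 * L0 + q0 * L1) / (q0 + q1) = Lstar := by
  have hq0 : 0 < q0 := hq0S _ hmem0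
  have hq1 : 0 < q1 := hq1S _ hmem1
  have hq0s : 0 < q0s := hq0S _ hmem0s
  have hq1s : 0 < q1s := hq1S _ hmem1s
  have hd : (0:ℝ) < q0 + q1 := by linarith
  have hds : (0:ℝ) < q0s + q1s := by linarith
  have hC : Chat * (q0 + q1) = L1 - L0 := by
    rw [hfix]; field_simp
  have h1 := hmin0 (L0s, q0s) hmem0s
  have h2 := hmin1 (L1s, q1s) hmem1s
  have h3 := hopt (L0, q0) hmem0 (L1, q1) hmem1
  simp only at h1 h2 h3
  apply le_antisymm
  · rw [hLstar, div_le_div_iff₀ hd hds]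
    nlinarith [mul_le_mul_of_nonneg_left h1 (le_of_lt hq1s),
      mul_le_mul_of_nonneg_left h2 (le_of_lt hq0s),
      hC, mul_pos hq0 hq1s, mul_pos hq1 hq0s]
  · exact h3
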